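/- Let (G, σ) be a flow-admissible signed cubic graph with negative edges exactly {uv, xy}, such that no 2-edge-cut of G contains a negative edge. Then the unsigned graph G* = (V(G), E(G) ∪ {ux} − {uv, xy}) is bridgeless (hence flow-admissible). -/

import Mathlib

open Finset SimpleGraph

attribute [local instance] Classical.propDecidable

variable {V : Type}

/-- `σ` is a valid `±1` signature on the edges of `G`. -/
def IsSignature (G : SimpleGraph V) (σ : Sym2 V → ℤ) : Prop :=
  ∀ e ∈ G.edgeSet, σ e = 1 ∨ σ e = -1

/-- The set of negative edges of the signed graph `(G, σ)`. -/
def NegEdges (G : SimpleGraph V) (σ : Sym2 V → ℤ) : Set (Sym2 V) :=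
  {e | e ∈ G.edgeSet ∧ σ e = -1}

/-- A bidirected orientation of the signed graph `(G, σ)`: `τ v e = 1` means that the
half-edge of `e` at `v` points towards `v`, and `τ v e = -1` that it points away from `v`.
On a positive edge the two half-edges are directed consistently, while on a negative edge
both half-edges point outwards (extroverted) or both point inwards (introverted). -/
def IsOrientation (G : SimpleGraph V) (σ : Sym2 V → ℤ) (τ : V → Sym2 V → ℤ) : Prop :=
  (∀ v e, τ v e = 1 ∨ τ v e = -1) ∧
  ∀ u v, G.Adj u v → τ u s(u, v) * τ v s(u, v) = - σ s(u, v)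

/-- `(τ, φ)` is an integer-valued flow on the signed graph `(G, σ)`:
Kirchhoff's law holds at every vertex. -/
def IsFlow [Fintype V] (G : SimpleGraph V) (σ : Sym2 V → ℤ)
    (τ : V → Sym2 V → ℤ) (φ : Sym2 V → ℤ) : Prop :=
  IsOrientation G σ τ ∧
    ∀ v : V, (∑ w : V, if G.Adj v w then τ v s(v, w) * φ s(v, w) else 0) = 0

/-- `(τ, φ)` is a nowhere-zero `k`-flow on `(G, σ)`. -/
def IsNZFlow [Fintype V] (G : SimpleGraph V) (σ : Sym2 V → ℤ) (k : ℤ)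
    (τ : V → Sym2 V → ℤ) (φ : Sym2 V → ℤ) : Prop :=
  IsFlow G σ τ φ ∧ ∀ e ∈ G.edgeSet, 0 < |φ e| ∧ |φ e| < k

/-- A signed graph is flow-admissible if it admits a nowhere-zero `k`-flow for some `k`. -/
def FlowAdmissible [Fintype V] (G : SimpleGraph V) (σ : Sym2 V → ℤ) : Prop :=
  ∃ (k : ℤ) (τ : V → Sym2 V → ℤ) (φ : Sym2 V → ℤ), IsNZFlow G σ k τ φ

/-- The flow number `F(G, σ)`: the least `k` admitting a nowhere-zero `k`-flow. -/
noncomputable def flowNumber [Fintype V] (G : SimpleGraph V) (σ : Sym2 V → ℤ) : ℕ :=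
  sInf {k : ℕ | ∃ τ φ, IsNZFlow G σ (k : ℤ) τ φ}

/-- An edge-cut of `G`: the set of edges crossing a nontrivial vertex partition. -/
def IsEdgeCut (G : SimpleGraph V) (X : Set (Sym2 V)) : Prop :=
  ∃ S : Set V, S.Nonempty ∧ Sᶜ.Nonempty ∧
    X = {e | e ∈ G.edgeSet ∧ ∃ a ∈ S, ∃ b ∈ Sᶜ, e = s(a, b)}

/-- The all-positive signature. -/
def allPos : Sym2 V → ℤ := fun _ => 1

/-- `G` is cubic (3-regular). -/
def CubicGraph (G : SimpleGraph V) : Prop := ∀ v : V, (G.neighborSet v).ncard = 3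

/-- `G` has no bridge. -/
def Bridgeless (G : SimpleGraph V) : Prop := ∀ e ∈ G.edgeSet, ¬ G.IsBridge e

/-- A walk is directed (with respect to the orientation `τ` of `(G, σ)`) if every dart of
the walk traverses a positive edge in the direction of its orientation. -/
def IsDirectedWalk {G : SimpleGraph V} (σ : Sym2 V → ℤ) (τ : V → Sym2 V → ℤ) {u v : V}
    (p : G.Walk u v) : Prop :=
  ∀ d ∈ p.darts, σ s(d.toProd.1, d.toProd.2) = 1 ∧
    τ d.toProd.2 s(d.toProd.1, d.toProd.2) = 1

/-- `M` is a perfect matching (1-factor) of `G`. -/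
def IsPM (G : SimpleGraph V) (M : Set (Sym2 V)) : Prop :=
  M ⊆ G.edgeSet ∧ ∀ v : V, ∃! e, e ∈ M ∧ v ∈ e

/-- `c` is a proper 3-edge-coloring of `G`. -/
def IsProper3EdgeColoring (G : SimpleGraph V) (c : Sym2 V → Fin 3) : Prop :=
  ∀ e₁ ∈ G.edgeSet, ∀ e₂ ∈ G.edgeSet, e₁ ≠ e₂ → (∃ w, w ∈ e₁ ∧ w ∈ e₂) → c e₁ ≠ c e₂


lemma coeff_zero {sv sw tv tw se : ℤ}
    (htv : tv = 1 ∨ tv = -1) (htw : tw = 1 ∨ tw = -1)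
    (hprod : tv * tw = -se)
    (hv : sv = 1 ∨ sv = 0 ∨ sv = -1) (hw : sw = 1 ∨ sw = 0 ∨ sw = -1)
    (h : sv * se = sw) : sv * tv + sw * tw = 0 := by
  rcases htv with rfl|rfl <;> rcases htw with rfl|rfl <;>
    rcases hv with rfl|rfl|rfl <;> rcases hw with rfl|rfl|rfl <;> omega

lemma coeff_ne {sv sw tv tw se : ℤ}
    (htv : tv = 1 ∨ tv = -1) (htw : tw = 1 ∨ tw = -1)
    (hprod : tv * tw = -se)
    (hv : sv = 1 ∨ sv = 0 ∨ sv = -1) (hw : sw = 1 ∨ sw = 0 ∨ sw = -1)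
    (h : sv * se ≠ sw) : sv * tv + sw * tw ≠ 0 := by
  rcases htv with rfl|rfl <;> rcases htw with rfl|rfl <;>
    rcases hv with rfl|rfl|rfl <;> rcases hw with rfl|rfl|rfl <;> omega

lemma flow_sum [Fintype V] {G : SimpleGraph V} {σ : Sym2 V → ℤ} {τ : V → Sym2 V → ℤ}
    {φ : Sym2 V → ℤ} (hf : IsFlow G σ τ φ) (s : V → ℤ) :
    ∑ v : V, ∑ w : V,
      (if G.Adj v w then (s v * τ v s(v, w) + s w * τ w s(v, w)) * φ s(v, w) else 0) = 0 := by
  have hsplit : ∀ v w : V,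
      (if G.Adj v w then (s v * τ v s(v, w) + s w * τ w s(v, w)) * φ s(v, w) else 0)
      = (if G.Adj v w then s v * (τ v s(v, w) * φ s(v, w)) else 0)
        + (if G.Adj v w then s w * (τ w s(v, w) * φ s(v, w)) else 0) := by
    intro v w; by_cases h : G.Adj v w <;> simp [h] <;> ring
  have hA : ∑ v : V, ∑ w : V,
      (if G.Adj v w then s v * (τ v s(v, w) * φ s(v, w)) else 0) = 0 := by
    have : ∀ v : V, ∑ w : V,
        (if G.Adj v w then s v * (τ v s(v, w) * φ s(v, w)) else 0) = 0 := by
      intro v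
      have : ∑ w : V, (if G.Adj v w then s v * (τ v s(v, w) * φ s(v, w)) else 0)
          = s v * ∑ w : V, (if G.Adj v w then τ v s(v, w) * φ s(v, w) else 0) := by
        rw [Finset.mul_sum]
        refine Finset.sum_congr rfl fun w _ => ?_
        by_cases h : G.Adj v w <;> simp [h]
      rw [this, hf.2 v, mul_zero]
    simp [this]
  have hB : ∑ v : V, ∑ w : V,
      (if G.Adj v w then s w * (τ w s(v, w) * φ s(v, w)) else 0) = 0 := by
    rw [Finset.sum_comm]
    have : ∀ w : V, ∑ v : V,
        (if G.Adj v w then s w * (τ w s(v, w) * φ s(v, w)) else 0) = 0 := by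
      intro w
      have h1 : ∀ v : V, (if G.Adj v w then s w * (τ w s(v, w) * φ s(v, w)) else 0)
          = (if G.Adj w v then s w * (τ w s(w, v) * φ s(w, v)) else 0) := by
        intro v
        rw [Sym2.eq_swap (a := v) (b := w), adj_comm]
      rw [Finset.sum_congr rfl fun v _ => h1 v]
      have : ∑ v : V, (if G.Adj w v then s w * (τ w s(w, v) * φ s(w, v)) else 0)
          = s w * ∑ v : V, (if G.Adj w v then τ w s(w, v) * φ s(w, v) else 0) := by
        rw [Finset.mul_sum]
        refine Finset.sum_congr rfl fun v _ => ?_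
        by_cases h : G.Adj w v <;> simp [h]
      rw [this, hf.2 w, mul_zero]
    simp [this]
  calc ∑ v : V, ∑ w : V,
      (if G.Adj v w then (s v * τ v s(v, w) + s w * τ w s(v, w)) * φ s(v, w) else 0)
      = ∑ v : V, ∑ w : V,
        ((if G.Adj v w then s v * (τ v s(v, w) * φ s(v, w)) else 0)
          + (if G.Adj v w then s w * (τ w s(v, w) * φ s(v, w)) else 0)) := by
        refine Finset.sum_congr rfl fun v _ => Finset.sum_congr rfl fun w _ => hsplit v w
    _ = (∑ v : V, ((∑ w : V, (if G.Adj v w then s v * (τ v s(v, w) * φ s(v, w)) else 0))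
          + (∑ w : V, (if G.Adj v w then s w * (τ w s(v, w) * φ s(v, w)) else 0)))) := by
        exact Finset.sum_congr rfl fun v _ => Finset.sum_add_distrib
    _ = (∑ v : V, ∑ w : V, (if G.Adj v w then s v * (τ v s(v, w) * φ s(v, w)) else 0))
          + (∑ v : V, ∑ w : V, (if G.Adj v w then s w * (τ w s(v, w) * φ s(v, w)) else 0)) :=
        Finset.sum_add_distrib
    _ = 0 := by rw [hA, hB]; ring

lemma key [Fintype V] {G : SimpleGraph V} {σ : Sym2 V → ℤ} {τ : V → Sym2 V → ℤ}
    {φ : Sym2 V → ℤ} (hf : IsFlow G σ τ φ) (s : V → ℤ) (a b : V) (hab : G.Adj a b)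
    (H : ∀ c d, G.Adj c d → s(c, d) ≠ s(a, b) →
      s c * τ c s(c, d) + s d * τ d s(c, d) = 0)
    (Hab : s a * τ a s(a, b) + s b * τ b s(a, b) ≠ 0) :
    φ s(a, b) = 0 := by
  classical
  have hne : a ≠ b := hab.ne
  set F : V → V → ℤ := fun c d =>
    (if G.Adj c d then (s c * τ c s(c, d) + s d * τ d s(c, d)) * φ s(c, d) else 0) with hF
  have h0 : ∑ c : V, ∑ d : V, F c d = 0 := flow_sum hf s
  have hzero : ∀ c d, c ≠ a ∨ d ≠ b → c ≠ b ∨ d ≠ a → F c d = 0 := by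
    intro c d h1 h2
    by_cases hcd : G.Adj c d
    · by_cases he : s(c, d) = s(a, b)
      · rcases Sym2.eq_iff.mp he with ⟨rfl, rfl⟩ | ⟨rfl, rfl⟩
        · rcases h1 with h | h <;> exact absurd rfl h
        · rcases h2 with h | h <;> exact absurd rfl h
      · simp only [hF, hcd, if_true, H c d hcd he, zero_mul]
    · simp [hF, hcd]
  have hinner : ∀ c : V, ∑ d : V, F c d =
      (if c = a then F a b else 0) + (if c = b then F b a else 0) := by
    intro c
    by_cases hca : c = a
    · subst hca
      rw [if_pos rfl, if_neg hne]
      rw [Finset.sum_eq_single b]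
      · ring
      · intro d _ hd; exact hzero c d (Or.inr hd) (Or.inl hne)
      · intro hmem; exact absurd (Finset.mem_univ b) hmem
    · by_cases hcb : c = b
      · subst hcb
        rw [if_neg hca, if_pos rfl]
        rw [Finset.sum_eq_single a]
        · ring
        · intro d _ hd; exact hzero c d (Or.inl hca) (Or.inr hd)
        · intro hmem; exact absurd (Finset.mem_univ a) hmem
      · rw [if_neg hca, if_neg hcb]
        rw [Finset.sum_eq_zero]
        · ring
        · intro d _; exact hzero c d (Or.inl hca) (Or.inl hcb)
  have h1 : F a b + F b a = 0 := by
    have := h0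
    rw [Finset.sum_congr rfl fun c _ => hinner c] at this
    rw [Finset.sum_add_distrib] at this
    simpa using this
  have hFba : F b a = F a b := by
    simp only [hF]
    rw [Sym2.eq_swap (a := b) (b := a)]
    rw [if_pos hab.symm, if_pos hab]
    ring
  rw [hFba] at h1
  have h2 : F a b = 0 := by omega
  have : (s a * τ a s(a, b) + s b * τ b s(a, b)) * φ s(a, b) = 0 := by
    simpa [hF, hab] using h2
  rcases mul_eq_zero.mp this with h | h
  · exact absurd h Hab
  · exact h

lemma Hgen {G : SimpleGraph V} {σ : Sym2 V → ℤ} {τ : V → Sym2 V → ℤ}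
    (hτ : IsOrientation G σ τ) (u v x y : V)
    (hσuv : σ s(u, v) = -1) (hσxy : σ s(x, y) = -1)
    (hpos : ∀ e ∈ G.edgeSet, e ≠ s(u, v) → e ≠ s(x, y) → σ e = 1)
    (s : V → ℤ) (hs : ∀ t, s t = 1 ∨ s t = 0 ∨ s t = -1) (exc : Sym2 V)
    (h1 : s(u, v) ≠ exc → s v = -(s u)) (h2 : s(x, y) ≠ exc → s y = -(s x))
    (h3 : ∀ p q, G.Adj p q → s(p, q) ≠ s(u, v) → s(p, q) ≠ s(x, y) → s(p, q) ≠ exc →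
      s p = s q) :
    ∀ c d, G.Adj c d → s(c, d) ≠ exc →
      s c * τ c s(c, d) + s d * τ d s(c, d) = 0 := by
  intro c d hcd hne
  have hprod := hτ.2 c d hcd
  have hτc := hτ.1 c s(c, d)
  have hτd := hτ.1 d s(c, d)
  by_cases h : s(c, d) = s(u, v)
  · have hσ : σ s(c, d) = -1 := by rw [h]; exact hσuv
    have huvexc : s(u, v) ≠ exc := h ▸ hne
    have hvu := h1 huvexc
    rcases Sym2.eq_iff.mp h with ⟨rfl, rfl⟩ | ⟨rfl, rfl⟩
    · exact coeff_zero hτc hτd hprod (hs c) (hs d) (by rw [hσ]; omega)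
    · exact coeff_zero hτc hτd hprod (hs c) (hs d) (by rw [hσ]; omega)
  · by_cases h' : s(c, d) = s(x, y)
    · have hσ : σ s(c, d) = -1 := by rw [h']; exact hσxy
      have hxyexc : s(x, y) ≠ exc := h' ▸ hne
      have hyx := h2 hxyexc
      rcases Sym2.eq_iff.mp h' with ⟨rfl, rfl⟩ | ⟨rfl, rfl⟩
      · exact coeff_zero hτc hτd hprod (hs c) (hs d) (by rw [hσ]; omega)
      · exact coeff_zero hτc hτd hprod (hs c) (hs d) (by rw [hσ]; omega)
    · have hσ : σ s(c, d) = 1 := hpos _ (G.mem_edgeSet.mpr hcd) h h'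
      have := h3 c d hcd h h' hne
      exact coeff_zero hτc hτd hprod (hs c) (hs d) (by rw [hσ]; omega)

lemma third_neighbor [Fintype V] {G : SimpleGraph V} (hcubic : ∀ t, (G.neighborSet t).ncard = 3)
    {w p q : V} (hp : G.Adj w p) (hq : G.Adj w q) (hpq : p ≠ q) :
    ∃ z, G.Adj w z ∧ z ≠ p ∧ z ≠ q ∧ ∀ t, G.Adj w t → t = p ∨ t = q ∨ t = z := by
  classical
  have hfin : (G.neighborSet w).Finite := by
    apply Set.finite_of_ncard_ne_zero; rw [hcubic w]; omega
  have hnotsub : ¬ G.neighborSet w ⊆ {p, q} := by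
    intro hsub
    have h1 := Set.ncard_le_ncard hsub (Set.toFinite _)
    rw [hcubic w, Set.ncard_pair hpq] at h1
    omega
  obtain ⟨z, hzN, hz⟩ := Set.not_subset.mp hnotsub
  simp only [Set.mem_insert_iff, Set.mem_singleton_iff, not_or] at hz
  refine ⟨z, hzN, hz.1, hz.2, ?_⟩
  have hsub : ({p, q, z} : Set V) ⊆ G.neighborSet w := by
    intro t ht
    rcases ht with rfl | rfl | rfl
    · exact hp
    · exact hq
    · exact hzN
  have hcard : ({p, q, z} : Set V).ncard = 3 := by
    rw [Set.ncard_insert_of_notMem (by simp [hpq, Ne.symm hz.1])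
      (Set.toFinite _)]
    rw [Set.ncard_insert_of_notMem (by simp [Ne.symm hz.2]) (Set.finite_singleton z)]
    simp
  have heq : ({p, q, z} : Set V) = G.neighborSet w := by
    apply Set.eq_of_subset_of_ncard_le hsub _ hfin
    rw [hcubic w, hcard]
  intro t ht
  have : t ∈ ({p, q, z} : Set V) := by rw [heq]; exact ht
  simpa using this

lemma sym2_ne {a b c d : V} (h1 : a = c → b ≠ d) (h2 : a = d → b ≠ c) :
    s(a, b) ≠ s(c, d) := by
  intro h
  rcases Sym2.eq_iff.mp h with ⟨x1, x2⟩ | ⟨x1, x2⟩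
  · exact h1 x1 x2
  · exact h2 x1 x2

lemma shared_vertex [Fintype V] {G : SimpleGraph V} {σ : Sym2 V → ℤ} {τ : V → Sym2 V → ℤ}
    {φ : Sym2 V → ℤ} (hf : IsFlow G σ τ φ) (hφ : ∀ e ∈ G.edgeSet, φ e ≠ 0)
    (hcubic : ∀ t, (G.neighborSet t).ncard = 3)
    {w p q : V} (hp : G.Adj w p) (hq : G.Adj w q) (hpq : p ≠ q)
    (hσp : σ s(w, p) = -1) (hσq : σ s(w, q) = -1)
    (hpos : ∀ e ∈ G.edgeSet, e ≠ s(w, p) → e ≠ s(w, q) → σ e = 1) : False := by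
  classical
  obtain ⟨z, hz, hzp, hzq, hall⟩ := third_neighbor hcubic hp hq hpq
  set s : V → ℤ := fun t => if t = w then -1 else 1 with hsdef
  have hs : ∀ t, s t = 1 ∨ s t = 0 ∨ s t = -1 := by
    intro t; by_cases h : t = w <;> simp [hsdef, h]
  have hσwz : σ s(w, z) = 1 := by
    apply hpos _ (G.mem_edgeSet.mpr hz)
    · exact sym2_ne (fun _ => hzp) (fun h _ => hp.ne' h.symm)
    · exact sym2_ne (fun _ => hzq) (fun h _ => hq.ne' h.symm)
  have hkey : φ s(w, z) = 0 := by
    apply key hf s w z hz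
    · intro c d hcd hne
      have hprod := hf.1.2 c d hcd
      have hτc := hf.1.1 c s(c, d)
      have hτd := hf.1.1 d s(c, d)
      apply coeff_zero hτc hτd hprod (hs c) (hs d)
      by_cases hcw : c = w
      · subst hcw
        have hd : d = p ∨ d = q ∨ d = z := hall d hcd
        rcases hd with rfl | rfl | rfl
        · rw [hσp]; simp [hsdef, hcd.ne', Ne.symm hp.ne]
        · rw [hσq]; simp [hsdef, hcd.ne', Ne.symm hq.ne]
        · exact absurd rfl hne
      · by_cases hdw : d = w
        · subst hdw
          have hc : c = p ∨ c = q ∨ c = z := hall c hcd.symm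
          have hswap : s(c, d) = s(d, c) := Sym2.eq_swap
          rcases hc with rfl | rfl | rfl
          · rw [hswap, hσp]; simp [hsdef, hcd.ne, hcw]
          · rw [hswap, hσq]; simp [hsdef, hcd.ne, hcw]
          · exact absurd Sym2.eq_swap hne
        · have hσ1 : σ s(c, d) = 1 := by
            apply hpos _ (G.mem_edgeSet.mpr hcd)
            · exact sym2_ne (fun h => absurd h hcw) (fun _ => hdw)
            · exact sym2_ne (fun h => absurd h hcw) (fun _ => hdw)
          rw [hσ1]; simp [hsdef, hcw, hdw]
    · have hprod := hf.1.2 w z hz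
      have hτc := hf.1.1 w s(w, z)
      have hτd := hf.1.1 z s(w, z)
      apply coeff_ne hτc hτd hprod (hs w) (hs z)
      rw [hσwz]; simp [hsdef, hz.ne']
  exact hφ _ (G.mem_edgeSet.mpr hz) hkey


lemma apply_cut {G : SimpleGraph V} {σ : Sym2 V → ℤ}
    (hcut : ∀ X, IsEdgeCut G X → X.ncard = 2 → ∀ e ∈ NegEdges G σ, e ∉ X)
    (S' : Set V) (c1 c2 : V) (hc1 : c1 ∈ S') (hc2 : c2 ∉ S') (E1 E2 : Sym2 V)
    (hE : {e | e ∈ G.edgeSet ∧ ∃ p ∈ S', ∃ q ∈ S'ᶜ, e = s(p, q)} = {E1, E2})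
    (h12 : E1 ≠ E2) (hneg : E1 ∈ NegEdges G σ) : False := by
  have h := hcut _ ⟨S', ⟨c1, hc1⟩, ⟨c2, hc2⟩, rfl⟩
    (by rw [hE]; exact Set.ncard_pair h12) E1 hneg
  rw [hE] at h
  exact h (Or.inl rfl)

/-- If no 2-edge-cut of a flow-admissible signed cubic graph with negative
edges `uv`, `xy` contains a negative edge, then the unsigned graph `G*` obtained by
replacing the negative edges with the single edge `ux` is bridgeless. -/
theorem stmt16 [Fintype V] (G : SimpleGraph V) (σ : Sym2 V → ℤ)
    (hσ : IsSignature G σ) (hcubic : CubicGraph G) (hadm : FlowAdmissible G σ)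
    (u v x y : V) (huv : G.Adj u v) (hxy : G.Adj x y)
    (hne : s(u, v) ≠ s(x, y))
    (hN : NegEdges G σ = {s(u, v), s(x, y)})
    (hcut : ∀ X, IsEdgeCut G X → X.ncard = 2 → ∀ e ∈ NegEdges G σ, e ∉ X) :
    Bridgeless
      (SimpleGraph.fromEdgeSet ((G.edgeSet \ {s(u, v), s(x, y)}) ∪ {s(u, x)})) := by
  classical
  obtain ⟨k, τ, φ, hf, hnzb⟩ := hadm
  have hφ : ∀ e ∈ G.edgeSet, φ e ≠ 0 := by
    intro e he h0
    have := (hnzb e he).1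
    rw [h0] at this; simp at this
  have hσuv : σ s(u, v) = -1 := by
    have : s(u, v) ∈ NegEdges G σ := by rw [hN]; left; rfl
    exact this.2
  have hσxy : σ s(x, y) = -1 := by
    have : s(x, y) ∈ NegEdges G σ := by rw [hN]; right; rfl
    exact this.2
  have hpos : ∀ e ∈ G.edgeSet, e ≠ s(u, v) → e ≠ s(x, y) → σ e = 1 := by
    intro e he h1 h2
    rcases hσ e he with h | h
    · exact h
    · exfalso
      have he2 : e ∈ NegEdges G σ := ⟨he, h⟩
      rw [hN] at he2
      rcases he2 with h3 | h3
      · exact h1 h3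
      · exact h2 h3
  -- Case 0: the two negative edges share a vertex
  by_cases hsh : u = x ∨ u = y ∨ v = x ∨ v = y
  · exfalso
    rcases hsh with rfl | rfl | rfl | rfl
    · -- u = x
      exact shared_vertex hf hφ hcubic huv hxy
        (fun h => hne (by rw [h])) hσuv hσxy hpos
    · -- u = y
      rw [show s(x, u) = s(u, x) from Sym2.eq_swap] at hσxy hpos hne
      exact shared_vertex hf hφ hcubic huv hxy.symm
        (fun h => hne (by rw [h])) hσuv hσxy hpos
    · -- v = x
      rw [show s(u, v) = s(v, u) from Sym2.eq_swap] at hσuv hpos hne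
      exact shared_vertex hf hφ hcubic huv.symm hxy
        (fun h => hne (by rw [h])) hσuv hσxy hpos
    · -- v = y
      rw [show s(u, v) = s(v, u) from Sym2.eq_swap] at hσuv hpos hne
      rw [show s(x, v) = s(v, x) from Sym2.eq_swap] at hσxy hpos hne
      exact shared_vertex hf hφ hcubic huv.symm hxy.symm
        (fun h => hne (by rw [h])) hσuv hσxy hpos
  push_neg at hsh
  obtain ⟨hux, huy, hvx, hvy⟩ := hsh
  have h_uv_ux : s(u, v) ≠ s(u, x) := sym2_ne (fun _ => hvx) (fun h _ => hux h)
  have h_xy_ux : s(x, y) ≠ s(u, x) := sym2_ne (fun h _ => hux h.symm)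
    (fun _ h => huy h.symm)
  set Gs : SimpleGraph V :=
    SimpleGraph.fromEdgeSet ((G.edgeSet \ {s(u, v), s(x, y)}) ∪ {s(u, x)}) with hGs
  have hGsadj : ∀ p q : V, Gs.Adj p q ↔
      ((s(p, q) ∈ G.edgeSet ∧ s(p, q) ≠ s(u, v) ∧ s(p, q) ≠ s(x, y)) ∨
        s(p, q) = s(u, x)) ∧ p ≠ q := by
    intro p q
    rw [hGs, fromEdgeSet_adj]
    simp only [Set.mem_union, Set.mem_diff, Set.mem_insert_iff, Set.mem_singleton_iff]
    tauto
  have hGadjGs : ∀ p q : V, G.Adj p q → s(p, q) ≠ s(u, v) → s(p, q) ≠ s(x, y) →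
      Gs.Adj p q := by
    intro p q h h1 h2
    exact (hGsadj p q).mpr ⟨Or.inl ⟨G.mem_edgeSet.mpr h, h1, h2⟩, h.ne⟩
  have hGsux : Gs.Adj u x := (hGsadj u x).mpr ⟨Or.inr rfl, hux⟩
  intro e
  induction e using Sym2.ind with
  | _ a b =>
  intro heGs hbr
  rw [SimpleGraph.isBridge_iff] at hbr
  obtain ⟨hGsab, hnr⟩ := And.intro (heGs : Gs.Adj a b) hbr
  set S : Set V := {t | (Gs \ SimpleGraph.fromEdgeSet {s(a, b)}).Reachable a t} with hSdef
  set s₀ : V → ℤ := fun t => if t ∈ S then 1 else -1 with hs₀def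
  have ha : a ∈ S := SimpleGraph.Reachable.refl a
  have hb : b ∉ S := hnr
  have hs₀ : ∀ t, s₀ t = 1 ∨ s₀ t = -1 := by
    intro t; by_cases h : t ∈ S <;> simp [hs₀def, h]
  have hs3 : ∀ t, s₀ t = 1 ∨ s₀ t = 0 ∨ s₀ t = -1 := by
    intro t; rcases hs₀ t with h | h
    · exact Or.inl h
    · exact Or.inr (Or.inr h)
  have hs₀a : s₀ a = 1 := by simp [hs₀def, ha]
  have hs₀b : s₀ b = -1 := by simp [hs₀def, hb]
  have hstep : ∀ p q : V, p ∈ S → Gs.Adj p q → s(p, q) ≠ s(a, b) → q ∈ S := by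
    intro p q hp hadj hnee
    have hd : (Gs \ SimpleGraph.fromEdgeSet {s(a, b)}).Adj p q := by
      rw [SimpleGraph.sdiff_adj]
      refine ⟨hadj, ?_⟩
      rw [fromEdgeSet_adj]
      rintro ⟨h1, -⟩
      exact hnee (by simpa using h1)
    exact hp.trans hd.reachable
  have hcross : ∀ p q : V, Gs.Adj p q → s(p, q) ≠ s(a, b) → s₀ p = s₀ q := by
    intro p q hadj hnee
    by_cases hp : p ∈ S <;> by_cases hq : q ∈ S
    · simp [hs₀def, hp, hq]
    · exact absurd (hstep p q hp hadj hnee) hq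
    · refine absurd (hstep q p hq hadj.symm ?_) hp
      rw [show s(q, p) = s(p, q) from Sym2.eq_swap]; exact hnee
    · simp [hs₀def, hp, hq]
  have hnc : ∀ p q : V, G.Adj p q → s(p, q) ≠ s(u, v) → s(p, q) ≠ s(x, y) →
      s(p, q) ≠ s(a, b) → s₀ p = s₀ q := by
    intro p q h h1 h2 h3
    exact hcross p q (hGadjGs p q h h1 h2) h3
  have hsame : ∀ p q c d : V, s(p, q) = s(c, d) → s₀ c = s₀ d → s₀ p = s₀ q := by
    intro p q c d h hcd
    rcases Sym2.eq_iff.mp h with ⟨rfl, rfl⟩ | ⟨rfl, rfl⟩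
    · exact hcd
    · exact hcd.symm
  have hclassify : ∀ p q : V, s(p, q) ∈ G.edgeSet → s₀ p ≠ s₀ q →
      s(p, q) = s(u, v) ∨ s(p, q) = s(x, y) ∨ s(p, q) = s(a, b) := by
    intro p q hmem hne'
    by_contra hcon; push_neg at hcon
    exact hne' (hnc p q (G.mem_edgeSet.mp hmem) hcon.1 hcon.2.1 hcon.2.2)
  by_cases hax : s(a, b) = s(u, x)
  · -- CASE A : the bridge is the new edge ux
    have hs₀x : s₀ x = -s₀ u := by
      rcases Sym2.eq_iff.mp hax with ⟨h1, h2⟩ | ⟨h1, h2⟩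
      · rw [← h1, ← h2, hs₀a, hs₀b]
      · rw [← h1, ← h2, hs₀a, hs₀b]; norm_num
    have hvcase : s₀ v = s₀ u ∨ s₀ v = -s₀ u := by
      rcases hs₀ v with h | h <;> rcases hs₀ u with h' | h' <;> omega
    have hycase : s₀ y = s₀ x ∨ s₀ y = -s₀ x := by
      rcases hs₀ y with h | h <;> rcases hs₀ x with h' | h' <;> omega
    rcases hvcase with hv | hv <;> rcases hycase with hy | hy
    · -- A(i) : v on u's side, y on x's side
      by_cases huxG : s(u, x) ∈ G.edgeSet
      · -- third neighbor of u gives a 2-edge-cut {uv, uw}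
        have huxadj : G.Adj u x := G.mem_edgeSet.mp huxG
        obtain ⟨w, hw, hwv, hwx, hallu⟩ := third_neighbor hcubic huv huxadj hvx
        have hwu : w ≠ u := hw.ne'
        have hs₀w : s₀ w = s₀ u := by
          refine (hnc u w hw ?_ ?_ ?_).symm
          · exact sym2_ne (fun _ => hwv) (fun h _ => huv.ne h)
          · exact sym2_ne (fun h _ => hux h) (fun h _ => huy h)
          · intro hh
            exact (sym2_ne (fun _ => hwx) (fun h _ => hux h) : s(u, w) ≠ s(u, x))
              (hh.trans hax)
        set s₁ : V → ℤ := fun t => if t = u then -s₀ u else s₀ t with hs₁def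
        refine apply_cut hcut {t | s₁ t = s₀ u} v u ?_ ?_ s(u, v) s(u, w) ?_ ?_ ?_
        · show s₁ v = s₀ u
          simp only [hs₁def]; rw [if_neg (Ne.symm huv.ne)]; exact hv
        · show ¬ s₁ u = s₀ u
          simp only [hs₁def, if_true]
          rcases hs₀ u with h | h <;> omega
        · ext e
          simp only [Set.mem_setOf_eq, Set.mem_compl_iff, Set.mem_insert_iff,
            Set.mem_singleton_iff]
          constructor
          · rintro ⟨heG, p, hp, q, hq, rfl⟩
            by_cases hpu : p = u
            · exfalso
              rw [hpu] at hp
              simp only [hs₁def, if_true] at hp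
              rcases hs₀ u with h | h <;> omega
            · by_cases hqu : q = u
              · rw [hqu] at heG ⊢
                have hadjpu : G.Adj u p := (G.mem_edgeSet.mp heG).symm
                simp only [hs₁def] at hp
                rw [if_neg hpu] at hp
                rcases hallu p hadjpu with rfl | rfl | rfl
                · left; exact Sym2.eq_swap
                · exfalso; rcases hs₀ u with h | h <;> omega
                · right; exact Sym2.eq_swap
              · simp only [hs₁def] at hp hq
                rw [if_neg hpu] at hp
                rw [if_neg hqu] at hq
                have hpq : s₀ p ≠ s₀ q := by rw [hp]; exact fun h => hq h.symm
                rcases hclassify p q heG hpq with h | h | h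
                · exfalso
                  rcases Sym2.eq_iff.mp h with ⟨h1, -⟩ | ⟨-, h2⟩
                  · exact hpu h1
                  · exact hqu h2
                · exfalso; exact hpq (hsame p q x y h hy.symm)
                · exfalso
                  rcases Sym2.eq_iff.mp (h.trans hax) with ⟨h1, -⟩ | ⟨-, h2⟩
                  · exact hpu h1
                  · exact hqu h2
          · rintro (rfl | rfl)
            · refine ⟨G.mem_edgeSet.mpr huv, v, ?_, u, ?_, Sym2.eq_swap⟩
              · simp only [hs₁def]; rw [if_neg (Ne.symm huv.ne)]; exact hv
              · simp only [hs₁def, if_true]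
                rcases hs₀ u with h | h <;> omega
            · refine ⟨G.mem_edgeSet.mpr hw, w, ?_, u, ?_, Sym2.eq_swap⟩
              · simp only [hs₁def]; rw [if_neg hwu]; exact hs₀w
              · simp only [hs₁def, if_true]
                rcases hs₀ u with h | h <;> omega
        · exact sym2_ne (fun _ => Ne.symm hwv) (fun h _ => hw.ne h)
        · rw [hN]; left; rfl
      · -- component of u contains only the negative edge uv
        have hGnc : ∀ p q : V, G.Adj p q → s₀ p = s₀ q := by
          intro p q h
          by_cases h1 : s(p, q) = s(u, v)
          · rcases Sym2.eq_iff.mp h1 with ⟨rfl, rfl⟩ | ⟨rfl, rfl⟩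
            · exact hv.symm
            · exact hv
          · by_cases h2 : s(p, q) = s(x, y)
            · rcases Sym2.eq_iff.mp h2 with ⟨rfl, rfl⟩ | ⟨rfl, rfl⟩
              · exact hy.symm
              · exact hy
            · refine hnc p q h h1 h2 (fun hh => huxG ?_)
              rw [← hax, ← hh]; exact G.mem_edgeSet.mpr h
        have hwalk : ∀ p q : V, G.Walk p q → s₀ p = s₀ q := by
          intro p q wk
          induction wk with
          | nil => rfl
          | cons h _ ih => exact (hGnc _ _ h).trans ih
        have hs₀comp : ∀ t, G.Reachable u t → s₀ t = s₀ u := by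
          intro t r
          obtain ⟨wk⟩ := r
          exact (hwalk u t wk).symm
        have hxnr : ¬ G.Reachable u x := by
          intro r
          have := hs₀comp x r
          rcases hs₀ u with h | h <;> omega
        have hynr : ¬ G.Reachable u y := by
          intro r
          have h1 := hs₀comp y r
          rcases hs₀ u with h | h <;> omega
        set s₂ : V → ℤ := fun t => if G.Reachable u t then 1 else 0 with hs₂def
        have hs₂ : ∀ t, s₂ t = 1 ∨ s₂ t = 0 ∨ s₂ t = -1 := by
          intro t; by_cases h : G.Reachable u t <;> simp [hs₂def, h]
        have hs₂u : s₂ u = 1 := by simp only [hs₂def]; rw [if_pos (SimpleGraph.Reachable.refl u)]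
        have hs₂v : s₂ v = 1 := by simp [hs₂def, huv.reachable]
        have hkey : φ s(u, v) = 0 := by
          refine key hf s₂ u v huv
            (Hgen hf.1 u v x y hσuv hσxy hpos s₂ hs₂ s(u, v)
              (fun h => absurd rfl h) ?_ ?_) ?_
          · intro _
            have h1 : s₂ x = 0 := by simp [hs₂def, hxnr]
            have h2 : s₂ y = 0 := by simp [hs₂def, hynr]
            omega
          · intro p q h _ _ _
            by_cases hr : G.Reachable u p
            · have : G.Reachable u q := hr.trans h.reachable
              simp [hs₂def, hr, this]
            · have : ¬ G.Reachable u q := fun r => hr (r.trans h.symm.reachable)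
              simp [hs₂def, hr, this]
          · refine coeff_ne (hf.1.1 u s(u, v)) (hf.1.1 v s(u, v)) (hf.1.2 u v huv)
              (hs₂ u) (hs₂ v) ?_
            rw [hσuv]; omega
        exact hφ _ (G.mem_edgeSet.mpr huv) hkey
    · -- A(iv) : v on u's side, y opposite x
      by_cases huxG : s(u, x) ∈ G.edgeSet
      · refine apply_cut hcut {t | s₀ t = 1} a b hs₀a (by rw [Set.mem_setOf_eq, hs₀b]; omega)
          s(x, y) s(u, x) ?_ h_xy_ux (by rw [hN]; right; rfl)
        · ext e
          simp only [Set.mem_setOf_eq, Set.mem_compl_iff, Set.mem_insert_iff,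
            Set.mem_singleton_iff]
          constructor
          · rintro ⟨heG, p, hp, q, hq, rfl⟩
            have hq' : s₀ q = -1 := by rcases hs₀ q with h | h <;> omega
            have hpq : s₀ p ≠ s₀ q := by omega
            rcases hclassify p q heG hpq with h | h | h
            · exact absurd (hsame p q u v h hv.symm) hpq
            · left; exact h
            · right; exact h.trans hax
          · rintro (rfl | rfl)
            · rcases hs₀ x with h | h
              · refine ⟨G.mem_edgeSet.mpr hxy, x, h, y, ?_, rfl⟩
                (try simp only [Set.mem_compl_iff, Set.mem_setOf_eq]); omega
              · refine ⟨G.mem_edgeSet.mpr hxy, y, by omega, x, ?_, Sym2.eq_swap⟩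
                (try simp only [Set.mem_compl_iff, Set.mem_setOf_eq]); omega
            · rcases hs₀ u with h | h
              · refine ⟨huxG, u, h, x, ?_, rfl⟩
                (try simp only [Set.mem_compl_iff, Set.mem_setOf_eq]); omega
              · refine ⟨huxG, x, by omega, u, ?_, Sym2.eq_swap⟩
                (try simp only [Set.mem_compl_iff, Set.mem_setOf_eq]); omega
      · have hkey : φ s(u, v) = 0 := by
          refine key hf s₀ u v huv
            (Hgen hf.1 u v x y hσuv hσxy hpos s₀ hs3 s(u, v)
              (fun h => absurd rfl h) (fun _ => hy) ?_) ?_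
          · intro p q h h1 h2 _
            refine hnc p q h h1 h2 (fun hh => huxG ?_)
            rw [← hax, ← hh]; exact G.mem_edgeSet.mpr h
          · refine coeff_ne (hf.1.1 u s(u, v)) (hf.1.1 v s(u, v)) (hf.1.2 u v huv)
              (hs3 u) (hs3 v) ?_
            rw [hσuv]
            rcases hs₀ u with h | h <;> omega
        exact hφ _ (G.mem_edgeSet.mpr huv) hkey
    · -- A(iii) : v opposite u, y on x's side
      by_cases huxG : s(u, x) ∈ G.edgeSet
      · refine apply_cut hcut {t | s₀ t = 1} a b hs₀a (by rw [Set.mem_setOf_eq, hs₀b]; omega)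
          s(u, v) s(u, x) ?_ h_uv_ux (by rw [hN]; left; rfl)
        · ext e
          simp only [Set.mem_setOf_eq, Set.mem_compl_iff, Set.mem_insert_iff,
            Set.mem_singleton_iff]
          constructor
          · rintro ⟨heG, p, hp, q, hq, rfl⟩
            have hq' : s₀ q = -1 := by rcases hs₀ q with h | h <;> omega
            have hpq : s₀ p ≠ s₀ q := by omega
            rcases hclassify p q heG hpq with h | h | h
            · left; exact h
            · exact absurd (hsame p q x y h hy.symm) hpq
            · right; exact h.trans hax
          · rintro (rfl | rfl)
            · rcases hs₀ u with h | h
              · refine ⟨G.mem_edgeSet.mpr huv, u, h, v, ?_, rfl⟩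
                (try simp only [Set.mem_compl_iff, Set.mem_setOf_eq]); omega
              · refine ⟨G.mem_edgeSet.mpr huv, v, by omega, u, ?_, Sym2.eq_swap⟩
                (try simp only [Set.mem_compl_iff, Set.mem_setOf_eq]); omega
            · rcases hs₀ u with h | h
              · refine ⟨huxG, u, h, x, ?_, rfl⟩
                (try simp only [Set.mem_compl_iff, Set.mem_setOf_eq]); omega
              · refine ⟨huxG, x, by omega, u, ?_, Sym2.eq_swap⟩
                (try simp only [Set.mem_compl_iff, Set.mem_setOf_eq]); omega
      · have hkey : φ s(x, y) = 0 := by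
          refine key hf s₀ x y hxy
            (Hgen hf.1 u v x y hσuv hσxy hpos s₀ hs3 s(x, y)
              (fun _ => hv) (fun h => absurd rfl h) ?_) ?_
          · intro p q h h1 h2 _
            refine hnc p q h h1 h2 (fun hh => huxG ?_)
            rw [← hax, ← hh]; exact G.mem_edgeSet.mpr h
          · refine coeff_ne (hf.1.1 x s(x, y)) (hf.1.1 y s(x, y)) (hf.1.2 x y hxy)
              (hs3 x) (hs3 y) ?_
            rw [hσxy]
            rcases hs₀ x with h | h <;> omega
        exact hφ _ (G.mem_edgeSet.mpr hxy) hkey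
    · -- A(ii) : v opposite u, y opposite x
      by_cases huxG : s(u, x) ∈ G.edgeSet
      · have huxadj : G.Adj u x := G.mem_edgeSet.mp huxG
        have hσux : σ s(u, x) = 1 := hpos _ huxG (Ne.symm h_uv_ux) (Ne.symm h_xy_ux)
        have hkey : φ s(u, x) = 0 := by
          refine key hf s₀ u x huxadj
            (Hgen hf.1 u v x y hσuv hσxy hpos s₀ hs3 s(u, x)
              (fun _ => hv) (fun _ => hy) ?_) ?_
          · intro p q h h1 h2 h3
            exact hnc p q h h1 h2 (fun hh => h3 (hh.trans hax))
          · refine coeff_ne (hf.1.1 u s(u, x)) (hf.1.1 x s(u, x))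
              (hf.1.2 u x huxadj) (hs3 u) (hs3 x) ?_
            rw [hσux]
            rcases hs₀ u with h | h <;> omega
        exact hφ _ huxG hkey
      · refine apply_cut hcut {t | s₀ t = 1} a b hs₀a (by rw [Set.mem_setOf_eq, hs₀b]; omega)
          s(u, v) s(x, y) ?_ hne (by rw [hN]; left; rfl)
        · ext e
          simp only [Set.mem_setOf_eq, Set.mem_compl_iff, Set.mem_insert_iff,
            Set.mem_singleton_iff]
          constructor
          · rintro ⟨heG, p, hp, q, hq, rfl⟩
            have hq' : s₀ q = -1 := by rcases hs₀ q with h | h <;> omega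
            rcases hclassify p q heG (by omega) with h | h | h
            · left; exact h
            · right; exact h
            · exfalso
              apply huxG
              rw [← hax, ← h]; exact heG
          · rintro (rfl | rfl)
            · rcases hs₀ u with h | h
              · refine ⟨G.mem_edgeSet.mpr huv, u, h, v, ?_, rfl⟩
                (try simp only [Set.mem_compl_iff, Set.mem_setOf_eq]); omega
              · refine ⟨G.mem_edgeSet.mpr huv, v, by omega, u, ?_, Sym2.eq_swap⟩
                (try simp only [Set.mem_compl_iff, Set.mem_setOf_eq]); omega
            · rcases hs₀ x with h | h
              · refine ⟨G.mem_edgeSet.mpr hxy, x, h, y, ?_, rfl⟩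
                (try simp only [Set.mem_compl_iff, Set.mem_setOf_eq]); omega
              · refine ⟨G.mem_edgeSet.mpr hxy, y, by omega, x, ?_, Sym2.eq_swap⟩
                (try simp only [Set.mem_compl_iff, Set.mem_setOf_eq]); omega
  · -- CASE B : the bridge is an ordinary (positive) edge of G
    have hesplit : s(a, b) ∈ G.edgeSet ∧ s(a, b) ≠ s(u, v) ∧ s(a, b) ≠ s(x, y) := by
      rcases ((hGsadj a b).mp hGsab).1 with h | h
      · exact h
      · exact absurd h hax
    obtain ⟨habG, hab_uv, hab_xy⟩ := hesplit
    have habadj : G.Adj a b := G.mem_edgeSet.mp habG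
    have hσab : σ s(a, b) = 1 := hpos _ habG hab_uv hab_xy
    have hs₀ux : s₀ u = s₀ x := hcross u x hGsux (fun h => hax h.symm)
    have hvcase : s₀ v = s₀ u ∨ s₀ v = -s₀ u := by
      rcases hs₀ v with h | h <;> rcases hs₀ u with h' | h' <;> omega
    have hycase : s₀ y = s₀ x ∨ s₀ y = -s₀ x := by
      rcases hs₀ y with h | h <;> rcases hs₀ x with h' | h' <;> omega
    rcases hvcase with hv | hv <;> rcases hycase with hy | hy
    · -- B(I) : both negative edges internal, all on the side of u
      set s₃ : V → ℤ := fun t => if s₀ t = s₀ u then 0 else 1 with hs₃def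
      have hs₃ : ∀ t, s₃ t = 1 ∨ s₃ t = 0 ∨ s₃ t = -1 := by
        intro t; by_cases h : s₀ t = s₀ u <;> simp [hs₃def, h]
      have hkey : φ s(a, b) = 0 := by
        refine key hf s₃ a b habadj
          (Hgen hf.1 u v x y hσuv hσxy hpos s₃ hs₃ s(a, b) ?_ ?_ ?_) ?_
        · intro _
          have h1 : s₃ u = 0 := by simp [hs₃def]
          have h2 : s₃ v = 0 := by simp [hs₃def, hv]
          omega
        · intro _
          have h1 : s₃ x = 0 := by simp [hs₃def, hs₀ux.symm]
          have h2 : s₃ y = 0 := by simp [hs₃def, hy.trans hs₀ux.symm]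
          omega
        · intro p q h h1 h2 h3
          have := hnc p q h h1 h2 h3
          simp only [hs₃def, this]
        · refine coeff_ne (hf.1.1 a s(a, b)) (hf.1.1 b s(a, b))
            (hf.1.2 a b habadj) (hs₃ a) (hs₃ b) ?_
          rw [hσab]
          have hA : (s₀ u = 1 → s₃ a = 0 ∧ s₃ b = 1) ∧
              (s₀ u = -1 → s₃ a = 1 ∧ s₃ b = 0) := by
            constructor <;> intro h <;> constructor <;>
              simp [hs₃def, hs₀a, hs₀b, h]
          rcases hs₀ u with h | h <;> omega
      exact hφ _ habG hkey
    · -- B(III) : xy crossing, uv not : 2-cut {xy, ab}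
      refine apply_cut hcut {t | s₀ t = 1} a b hs₀a (by rw [Set.mem_setOf_eq, hs₀b]; omega)
        s(x, y) s(a, b) ?_ (Ne.symm hab_xy) (by rw [hN]; right; rfl)
      · ext e
        simp only [Set.mem_setOf_eq, Set.mem_compl_iff, Set.mem_insert_iff,
          Set.mem_singleton_iff]
        constructor
        · rintro ⟨heG, p, hp, q, hq, rfl⟩
          have hq' : s₀ q = -1 := by rcases hs₀ q with h | h <;> omega
          have hpq : s₀ p ≠ s₀ q := by omega
          rcases hclassify p q heG hpq with h | h | h
          · exact absurd (hsame p q u v h hv.symm) hpq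
          · left; exact h
          · right; exact h
        · rintro (rfl | rfl)
          · rcases hs₀ x with h | h
            · refine ⟨G.mem_edgeSet.mpr hxy, x, h, y, ?_, rfl⟩
              (try simp only [Set.mem_compl_iff, Set.mem_setOf_eq]); omega
            · refine ⟨G.mem_edgeSet.mpr hxy, y, by omega, x, ?_, Sym2.eq_swap⟩
              (try simp only [Set.mem_compl_iff, Set.mem_setOf_eq]); omega
          · refine ⟨habG, a, hs₀a, b, ?_, rfl⟩
            (try simp only [Set.mem_compl_iff, Set.mem_setOf_eq]); omega
    · -- B(II) : uv crossing, xy not : 2-cut {uv, ab}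
      refine apply_cut hcut {t | s₀ t = 1} a b hs₀a (by rw [Set.mem_setOf_eq, hs₀b]; omega)
        s(u, v) s(a, b) ?_ (Ne.symm hab_uv) (by rw [hN]; left; rfl)
      · ext e
        simp only [Set.mem_setOf_eq, Set.mem_compl_iff, Set.mem_insert_iff,
          Set.mem_singleton_iff]
        constructor
        · rintro ⟨heG, p, hp, q, hq, rfl⟩
          have hq' : s₀ q = -1 := by rcases hs₀ q with h | h <;> omega
          have hpq : s₀ p ≠ s₀ q := by omega
          rcases hclassify p q heG hpq with h | h | h
          · left; exact h
          · exact absurd (hsame p q x y h hy.symm) hpq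
          · right; exact h
        · rintro (rfl | rfl)
          · rcases hs₀ u with h | h
            · refine ⟨G.mem_edgeSet.mpr huv, u, h, v, ?_, rfl⟩
              (try simp only [Set.mem_compl_iff, Set.mem_setOf_eq]); omega
            · refine ⟨G.mem_edgeSet.mpr huv, v, by omega, u, ?_, Sym2.eq_swap⟩
              (try simp only [Set.mem_compl_iff, Set.mem_setOf_eq]); omega
          · refine ⟨habG, a, hs₀a, b, ?_, rfl⟩
            (try simp only [Set.mem_compl_iff, Set.mem_setOf_eq]); omega
    · -- B(IV) : both negative edges crossing
      have hkey : φ s(a, b) = 0 := by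
        refine key hf s₀ a b habadj
          (Hgen hf.1 u v x y hσuv hσxy hpos s₀ hs3 s(a, b)
            (fun _ => hv) (fun _ => hy) (fun p q h h1 h2 h3 => hnc p q h h1 h2 h3)) ?_
        refine coeff_ne (hf.1.1 a s(a, b)) (hf.1.1 b s(a, b))
          (hf.1.2 a b habadj) (hs3 a) (hs3 b) ?_
        rw [hσab]; omega
      exact hφ _ habG hkey
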